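/- Let (θ_k, r_k) be the global AEGD iterates with effective step sizes η_k := η r_{k+1}/g(θ_k). Suppose f is L-smooth, has a minimizer θ* with minimum value f(θ*), and satisfies the Polyak–Łojasiewicz inequality with constant μ > 0. If η_j ≤ 1/L for all j with k₀ ≤ j < k (for some k₀ ≥ 0), then f(θ_k) − f(θ*) ≤ exp(−c₀ (k − k₀) r_k) · (f(θ_{k₀}) − f(θ*)), where c₀ := μη/√(f(θ_{k₀})+c). -/

import Mathlib

open Filter Topology Finset

-- descent lemma
lemma descent_aux {n : ℕ} (f : EuclideanSpace ℝ (Fin n) → ℝ)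
    (hf : Differentiable ℝ f) (L : ℝ) (hL : 0 < L)
    (hLip : ∀ u v, ‖gradient f u - gradient f v‖ ≤ L * ‖u - v‖)
    (x v : EuclideanSpace ℝ (Fin n)) :
    f (x + v) ≤ f x + (inner ℝ (gradient f x) v : ℝ) + L / 2 * ‖v‖ ^ 2 := by
  have lipG : LipschitzWith L.toNNReal (gradient f) := by
    apply LipschitzWith.of_dist_le_mul
    intro u w
    simpa [dist_eq_norm, Real.coe_toNNReal L hL.le] using hLip u w
  set φ' : ℝ → ℝ := fun t => (inner ℝ (gradient f (x + t • v)) v : ℝ) with hφ'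
  have hcurve : ∀ t : ℝ, HasDerivAt (fun s : ℝ => x + s • v) v t := by
    intro t
    simpa using ((hasDerivAt_id t).smul_const v).const_add x
  have hderiv : ∀ t : ℝ, HasDerivAt (fun s => f (x + s • v)) (φ' t) t := by
    intro t
    have h1 := (hf (x + t • v)).hasGradientAt.hasFDerivAt
    have := h1.comp_hasDerivAt t (hcurve t)
    simpa [hφ', InnerProductSpace.toDual_apply_apply, Function.comp_def] using this
  have hcontG : Continuous φ' := by
    have : Continuous fun t : ℝ => gradient f (x + t • v) :=
      lipG.continuous.comp (by continuity)
    exact (this.inner continuous_const)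
  have hint : IntervalIntegrable φ' MeasureTheory.volume 0 1 :=
    hcontG.intervalIntegrable 0 1
  have hFTC : ∫ t in (0:ℝ)..1, φ' t = f (x + v) - f x := by
    have := intervalIntegral.integral_eq_sub_of_hasDerivAt
      (f := fun s => f (x + s • v)) (f' := φ')
      (fun t _ => hderiv t) hint
    simpa using this
  have hpt : ∀ t ∈ Set.Icc (0:ℝ) 1,
      φ' t ≤ (inner ℝ (gradient f x) v : ℝ) + L * ‖v‖ ^ 2 * t := by
    rintro t ⟨ht0, ht1⟩
    have h1 : φ' t - (inner ℝ (gradient f x) v : ℝ)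
        = (inner ℝ (gradient f (x + t • v) - gradient f x) v : ℝ) := by
      rw [inner_sub_left]
    have h2 : (inner ℝ (gradient f (x + t • v) - gradient f x) v : ℝ)
        ≤ ‖gradient f (x + t • v) - gradient f x‖ * ‖v‖ := real_inner_le_norm _ _
    have h3 : ‖gradient f (x + t • v) - gradient f x‖ ≤ L * (t * ‖v‖) := by
      have := hLip (x + t • v) x
      simpa [norm_smul, abs_of_nonneg ht0] using this
    nlinarith [norm_nonneg v, norm_nonneg (gradient f (x + t • v) - gradient f x)]
  have hint2 : IntervalIntegrable
      (fun t => (inner ℝ (gradient f x) v : ℝ) + L * ‖v‖ ^ 2 * t)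
      MeasureTheory.volume 0 1 := by
    apply Continuous.intervalIntegrable; continuity
  have hmono := intervalIntegral.integral_mono_on zero_le_one hint hint2 hpt
  have hval : ∫ t in (0:ℝ)..1,
      ((inner ℝ (gradient f x) v : ℝ) + L * ‖v‖ ^ 2 * t)
      = (inner ℝ (gradient f x) v : ℝ) + L / 2 * ‖v‖ ^ 2 := by
    rw [intervalIntegral.integral_add (intervalIntegrable_const)
      ((intervalIntegral.intervalIntegrable_id).const_mul _)]
    rw [intervalIntegral.integral_const_mul, integral_id, intervalIntegral.integral_const]
    simp
    ring
  rw [hFTC] at hmono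
  rw [hval] at hmono
  linarith

lemma grad_sqrt_aux {n : ℕ} (f : EuclideanSpace ℝ (Fin n) → ℝ)
    (hf : Differentiable ℝ f) (c : ℝ) (hfc : ∀ x, 0 < f x + c)
    (x : EuclideanSpace ℝ (Fin n)) :
    gradient (fun x => Real.sqrt (f x + c)) x
      = (1 / (2 * Real.sqrt (f x + c))) • gradient f x := by
  have h1 : HasFDerivAt (fun x => f x + c)
      (InnerProductSpace.toDual ℝ _ (gradient f x)) x :=
    ((hf x).hasGradientAt.hasFDerivAt).add_const c
  have h2 := (Real.hasDerivAt_sqrt (ne_of_gt (hfc x))).comp_hasFDerivAt x h1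
  have h3 : HasGradientAt (fun x => Real.sqrt (f x + c))
      ((1 / (2 * Real.sqrt (f x + c))) • gradient f x) x := by
    rw [hasGradientAt_iff_hasFDerivAt, map_smul]
    exact h2
  exact h3.gradient

theorem aegd_pl_linear_rate {n : ℕ} (f : EuclideanSpace ℝ (Fin n) → ℝ)
    (hf : Differentiable ℝ f) (hbdd : ∃ B : ℝ, ∀ x, B ≤ f x)
    (c : ℝ) (hc : 0 < c) (hfc : ∀ x, 0 < f x + c)
    (g : EuclideanSpace ℝ (Fin n) → ℝ) (hg : g = fun x => Real.sqrt (f x + c))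
    (L : ℝ) (hL : 0 < L)
    (hLip : ∀ u v, ‖gradient f u - gradient f v‖ ≤ L * ‖u - v‖)
    (θstar : EuclideanSpace ℝ (Fin n)) (hmin : ∀ x, f θstar ≤ f x)
    (μ : ℝ) (hμ : 0 < μ)
    (hPL : ∀ x, μ * (f x - f θstar) ≤ 1 / 2 * ‖gradient f x‖ ^ 2)
    (η : ℝ) (hη : 0 < η)
    (θ : ℕ → EuclideanSpace ℝ (Fin n)) (r : ℕ → ℝ)
    (hr0 : r 0 = g (θ 0))
    (hr : ∀ k, r (k + 1) = r k / (1 + 2 * η * ‖gradient g (θ k)‖ ^ 2))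
    (hθ : ∀ k, θ (k + 1) = θ k - (2 * η * r (k + 1)) • gradient g (θ k))
    (ηk : ℕ → ℝ) (hηk : ∀ k, ηk k = η * r (k + 1) / g (θ k))
    (k₀ k : ℕ) (hk : k₀ ≤ k)
    (hstep : ∀ j, k₀ ≤ j → j < k → ηk j ≤ 1 / L) :
    f (θ k) - f θstar
      ≤ Real.exp (-(μ * η / Real.sqrt (f (θ k₀) + c)) * ((k : ℝ) - (k₀ : ℝ)) * r k)
        * (f (θ k₀) - f θstar) := by
  subst hg
  have gpos : ∀ x : EuclideanSpace ℝ (Fin n), 0 < Real.sqrt (f x + c) :=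
    fun x => Real.sqrt_pos.mpr (hfc x)
  have hgrad := grad_sqrt_aux f hf c hfc
  -- positivity of r
  have rpos : ∀ m, 0 < r m := by
    intro m
    induction m with
    | zero => rw [hr0]; exact gpos _
    | succ m ih =>
      rw [hr m]
      apply div_pos ih
      have := norm_nonneg (gradient (fun x => Real.sqrt (f x + c)) (θ m))
      nlinarith
  have rant : Antitone r := by
    apply antitone_nat_of_succ_le
    intro m
    rw [hr m]
    apply div_le_self (rpos m).le
    have := norm_nonneg (gradient (fun x => Real.sqrt (f x + c)) (θ m))
    nlinarith
  have hη0 : ∀ j, 0 ≤ ηk j := by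
    intro j
    rw [hηk j]
    have h1 := (rpos (j + 1)).le
    positivity
  -- update in terms of gradient of f
  have hθ' : ∀ j, θ (j + 1) = θ j + (-(ηk j)) • gradient f (θ j) := by
    intro j
    have hs : Real.sqrt (f (θ j) + c) ≠ 0 := (gpos _).ne'
    rw [hθ j, hgrad, smul_smul, hηk j, sub_eq_add_neg, ← neg_smul]
    congr 1
    field_simp
  -- per-step descent
  have key : ∀ j, ηk j ≤ 1 / L →
      f (θ (j + 1)) ≤ f (θ j) - ηk j / 2 * ‖gradient f (θ j)‖ ^ 2 := by
    intro j hj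
    have hd := descent_aux f hf L hL hLip (θ j) ((-(ηk j)) • gradient f (θ j))
    rw [← hθ' j] at hd
    have hin : (inner ℝ (gradient f (θ j)) ((-(ηk j)) • gradient f (θ j)) : ℝ)
        = -(ηk j) * ‖gradient f (θ j)‖ ^ 2 := by
      rw [real_inner_smul_right, real_inner_self_eq_norm_sq]
    have hns : ‖(-(ηk j)) • gradient f (θ j)‖ ^ 2 = ηk j ^ 2 * ‖gradient f (θ j)‖ ^ 2 := by
      rw [norm_smul]
      rw [mul_pow]
      congr 1
      rw [Real.norm_eq_abs, abs_neg, abs_of_nonneg (hη0 j)]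
    rw [hin, hns] at hd
    have hLj : L * ηk j ≤ 1 := by
      rw [le_div_iff₀ hL] at hj
      linarith
    have hx : 0 ≤ (1 - L * ηk j) * (ηk j * ‖gradient f (θ j)‖ ^ 2) :=
      mul_nonneg (sub_nonneg.mpr hLj)
        (mul_nonneg (hη0 j) (sq_nonneg _))
    nlinarith
  -- monotone decrease of f within the window
  have hfdec : ∀ m, k₀ ≤ m → m ≤ k → f (θ m) ≤ f (θ k₀) := by
    intro m hm
    induction m, hm using Nat.le_induction with
    | base => intro _; exact le_rfl
    | succ m hm ih =>
      intro hmk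
      have hmlt : m < k := Nat.lt_of_succ_le hmk
      have h1 := key m (hstep m hm hmlt)
      have h2 : 0 ≤ ηk m / 2 * ‖gradient f (θ m)‖ ^ 2 := by
        have := hη0 m; positivity
      have := ih (le_of_lt hmlt)
      linarith
  -- lower bound on step sizes
  set a : ℝ := μ * η / Real.sqrt (f (θ k₀) + c) * r k with ha
  have hstepl : ∀ j, k₀ ≤ j → j < k → a ≤ μ * ηk j := by
    intro j hj hjk
    rw [hηk j, ha]
    have hr1 : r k ≤ r (j + 1) := rant (Nat.succ_le_of_lt hjk)
    have hsq : Real.sqrt (f (θ j) + c) ≤ Real.sqrt (f (θ k₀) + c) := by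
      apply Real.sqrt_le_sqrt
      have := hfdec j hj (le_of_lt hjk)
      linarith
    have hdiv : η * r k / Real.sqrt (f (θ k₀) + c)
        ≤ η * r (j + 1) / Real.sqrt (f (θ j) + c) := by
      apply div_le_div₀
      · have := (rpos (j + 1)).le; positivity
      · nlinarith
      · exact gpos _
      · exact hsq
    calc μ * η / Real.sqrt (f (θ k₀) + c) * r k
        = μ * (η * r k / Real.sqrt (f (θ k₀) + c)) := by ring
      _ ≤ μ * (η * r (j + 1) / Real.sqrt (f (θ j) + c)) := by
          exact mul_le_mul_of_nonneg_left hdiv hμ.le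
  -- main induction
  have main : ∀ m, k₀ ≤ m → m ≤ k →
      f (θ m) - f θstar
        ≤ Real.exp (-a * ((m : ℝ) - (k₀ : ℝ))) * (f (θ k₀) - f θstar) := by
    intro m hm
    induction m, hm using Nat.le_induction with
    | base => intro _; simp
    | succ m hm ih =>
      intro hmk
      have hmlt : m < k := Nat.lt_of_succ_le hmk
      have ihm := ih (le_of_lt hmlt)
      have h1 := key m (hstep m hm hmlt)
      have hpl := hPL (θ m)
      have hΔm : 0 ≤ f (θ m) - f θstar := sub_nonneg.mpr (hmin _)
      have hstep2 : f (θ (m + 1)) - f θstar ≤ (1 - μ * ηk m) * (f (θ m) - f θstar) := by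
        nlinarith [hη0 m]
      have h2 : 1 - μ * ηk m ≤ Real.exp (-a) := by
        have := Real.add_one_le_exp (-a)
        have := hstepl m hm hmlt
        linarith
      have h3 : f (θ (m + 1)) - f θstar ≤ Real.exp (-a) * (f (θ m) - f θstar) :=
        le_trans hstep2 (mul_le_mul_of_nonneg_right h2 hΔm)
      calc f (θ (m + 1)) - f θstar
          ≤ Real.exp (-a) * (f (θ m) - f θstar) := h3
        _ ≤ Real.exp (-a) * (Real.exp (-a * ((m : ℝ) - (k₀ : ℝ))) * (f (θ k₀) - f θstar)) :=
            mul_le_mul_of_nonneg_left ihm (Real.exp_pos _).le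
        _ = Real.exp (-a * (((m : ℝ) + 1) - (k₀ : ℝ))) * (f (θ k₀) - f θstar) := by
            rw [← mul_assoc, ← Real.exp_add]; ring_nf
        _ = Real.exp (-a * (((m + 1 : ℕ) : ℝ) - (k₀ : ℝ))) * (f (θ k₀) - f θstar) := by
            push_cast; ring_nf
  have hfin := main k hk le_rfl
  have heq : -(μ * η / Real.sqrt (f (θ k₀) + c)) * ((k : ℝ) - (k₀ : ℝ)) * r k
      = -a * ((k : ℝ) - (k₀ : ℝ)) := by rw [ha]; ring
  rw [heq]
  exact hfin
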